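/- arXiv:2005.05681 — 5 statements merged into one kernel-verified Lean document; each statement's English description precedes it below -/
import Mathlib

section
/- If p and q are periods of a string T with p + q ≤ |T|, then gcd(p, q) is also a period of T (weak Fine and Wilf periodicity lemma). -/
/-- `p` is a period of the string (list) `S`. -/
def IsPeriod {α : Type*} (S : List α) (p : ℕ) : Prop :=
  0 < p ∧ ∀ i, i + p < S.length → S[i]? = S[i + p]?

/-- The smallest period of `S`. -/
noncomputable def minPeriod {α : Type*} (S : List α) : ℕ :=
  sInf {p | IsPeriod S p}

/-- `P` occurs in `S` at (0-indexed) position `i`. -/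
def OccursAt {α : Type*} (P S : List α) (i : ℕ) : Prop :=
  (S.drop i).take P.length = P ∧ i + P.length ≤ S.length

/-- The fragment `T[a..b]` (0-indexed, inclusive). -/
def frag {α : Type*} (T : List α) (a b : ℕ) : List α :=
  (T.drop a).take (b + 1 - a)

/-- `T[a..b]` is a run (maximal periodic fragment) of `T`. -/
def IsRun {α : Type*} (T : List α) (a b : ℕ) : Prop :=
  a ≤ b ∧ b < T.length ∧
  2 * minPeriod (frag T a b) ≤ b + 1 - a ∧
  (a = 0 ∨ T[a - 1]? ≠ T[a - 1 + minPeriod (frag T a b)]?) ∧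
  (b + 1 = T.length ∨ T[b + 1]? ≠ T[b + 1 - minPeriod (frag T a b)]?)

/-- The occurrence of the square `U · U` at position `s` of `T` is induced by the run `T[a..b]`. -/
def InducedOcc {α : Type*} (T U : List α) (s a b : ℕ) : Prop :=
  U ≠ [] ∧ IsRun T a b ∧ OccursAt (U ++ U) T s ∧ a ≤ s ∧
  s + 2 * U.length ≤ b + 1 ∧ minPeriod U = minPeriod (frag T a b)

/-- The `k`-th power `V^k` of a string `V`. -/
def listPow {α : Type*} (V : List α) (k : ℕ) : List α :=
  (List.replicate k V).flatten


lemma sub_period {α : Type*} (T : List α) (p q : ℕ)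
    (hp : IsPeriod T p) (hq : IsPeriod T q) (hlt : q < p) (h : p + q ≤ T.length) :
    IsPeriod T (p - q) := by
  obtain ⟨hp0, hpP⟩ := hp
  obtain ⟨hq0, hqP⟩ := hq
  refine ⟨Nat.sub_pos_of_lt hlt, fun i hi => ?_⟩
  by_cases hcase : i + p < T.length
  · have h1 := hpP i hcase
    have h2 : (i + (p - q)) + q < T.length := by omega
    have h3 := hqP (i + (p - q)) h2
    rw [h1, h3]
    congr 1
    omega
  · have hiq : q ≤ i := by omega
    have h1 := hqP (i - q) (by omega)
    have h2 := hpP (i - q) (by omega)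
    have e1 : i - q + q = i := by omega
    have e2 : i - q + p = i + (p - q) := by omega
    rw [e1] at h1
    rw [e2] at h2
    rw [← h1, h2]

/-- Weak Fine and Wilf periodicity lemma: if `p` and `q` are periods of `T` with
`p + q ≤ |T|`, then `gcd p q` is also a period of `T`. -/
theorem stmt1 {α : Type*} (T : List α) (p q : ℕ)
    (hp : IsPeriod T p) (hq : IsPeriod T q) (h : p + q ≤ T.length) :
    IsPeriod T (Nat.gcd p q) := by
  have key : ∀ n p q, p + q = n → IsPeriod T p → IsPeriod T q → p + q ≤ T.length →
      IsPeriod T (Nat.gcd p q) := by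
    intro n
    induction n using Nat.strong_induction_on with
    | _ n ih =>
    intro p q hn hp hq h
    have hp0 := hp.1
    have hq0 := hq.1
    rcases lt_trichotomy p q with hlt | heq | hgt
    · have hsub := sub_period T q p hq hp hlt (by omega)
      have := ih (q - p + p) (by omega) (q - p) p rfl hsub hp (by omega)
      rwa [Nat.gcd_sub_self_left hlt.le, Nat.gcd_comm] at this
    · subst heq
      rw [Nat.gcd_self]
      exact hp
    · have hsub := sub_period T p q hp hq hgt (by omega)
      have := ih (p - q + q) (by omega) (p - q) q rfl hsub hq (by omega)
      rwa [Nat.gcd_sub_self_left hgt.le] at this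

  exact key (p + q) p q rfl hp hq h
end

section
/- For any position i in a string T of length n and any even integer m, there are at most 4 highly periodic runs R containing position i with m ≤ per(R) < (3/2)m. Consequently, each position is contained in O(log n) highly periodic runs, and the sum of the lengths of all highly periodic runs in T is O(n log n). -/
section helpers
variable {α : Type*}

def PerOn (T : List α) (a b p : ℕ) : Prop :=
  ∀ j, a ≤ j → j + p ≤ b → T[j]? = T[j + p]?

lemma isPeriod_large (S : List α) : IsPeriod S (S.length + 1) :=
  ⟨Nat.succ_pos _, fun i h => by omega⟩

lemma minPeriod_mem (S : List α) : IsPeriod S (minPeriod S) := by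
  have h : {p | IsPeriod S p}.Nonempty := ⟨S.length + 1, isPeriod_large S⟩
  exact Nat.sInf_mem h

lemma minPeriod_pos (S : List α) : 0 < minPeriod S := (minPeriod_mem S).1

lemma minPeriod_le {S : List α} {p : ℕ} (h : IsPeriod S p) : minPeriod S ≤ p :=
  Nat.sInf_le (show p ∈ {p | IsPeriod S p} from h)

lemma frag_getElem? (T : List α) (a b j : ℕ) :
    (frag T a b)[j]? = if j < b + 1 - a then T[a + j]? else none := by
  simp [frag, List.getElem?_take, List.getElem?_drop]

lemma isPeriod_frag_iff {T : List α} {a b : ℕ} (hb : b < T.length) (hab : a ≤ b) (p : ℕ) :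
    IsPeriod (frag T a b) p ↔ 0 < p ∧ PerOn T a b p := by
  have hlen : (frag T a b).length = b + 1 - a := by
    simp [frag]; omega
  constructor
  · rintro ⟨hp, h⟩
    refine ⟨hp, fun j hj hjp => ?_⟩
    have h2 := h (j - a) (by omega)
    rw [frag_getElem?, frag_getElem?, if_pos (by omega), if_pos (by omega)] at h2
    rw [show a + (j - a) = j by omega, show a + (j - a + p) = j + p by omega] at h2
    exact h2
  · rintro ⟨hp, h⟩
    refine ⟨hp, fun i hi => ?_⟩
    rw [hlen] at hi
    rw [frag_getElem?, frag_getElem?, if_pos (by omega), if_pos hi]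
    have h2 := h (a + i) (by omega) (by omega)
    rwa [Nat.add_assoc] at h2

lemma IsRun.perOn {T : List α} {a b : ℕ} (h : IsRun T a b) :
    PerOn T a b (minPeriod (frag T a b)) :=
  ((isPeriod_frag_iff h.2.1 h.1 _).1 (minPeriod_mem _)).2

lemma PerOn.mono {T : List α} {a b a' b' p : ℕ} (h : PerOn T a b p) (ha : a ≤ a')
    (hb : b' ≤ b) : PerOn T a' b' p := fun j hj hjp => h j (by omega) (by omega)


lemma perOn_extend_right {T : List α} {a b c d p g : ℕ} (hp : 0 < p)
    (hab : PerOn T a b p) (hcd : PerOn T c d g) (hwin : c + p + g ≤ d + 1)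
    (hac : a ≤ c) (hdb : d ≤ b) :
    ∀ j, c ≤ j → j + g ≤ b → T[j]? = T[j + g]? := by
  intro j
  induction j using Nat.strong_induction_on with
  | _ j ih =>
    intro hcj hjb
    by_cases hd : j + g ≤ d
    · exact hcd j hcj hd
    · have hcp : c + p ≤ j := by omega
      have h1 : T[j - p]? = T[j]? := by
        have h := hab (j - p) (by omega) (by omega)
        rwa [Nat.sub_add_cancel (by omega)] at h
      have h2 : T[j - p + g]? = T[j + g]? := by
        have h := hab (j - p + g) (by omega) (by omega)
        rwa [show j - p + g + p = j + g by omega] at h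
      have h3 := ih (j - p) (by omega) (by omega) (by omega)
      rw [← h1, ← h2, h3]

lemma perOn_extend {T : List α} {a b c d p g : ℕ} (hp : 0 < p) (hg : 0 < g)
    (hab : PerOn T a b p) (hcd : PerOn T c d g) (hwin : c + p + g ≤ d + 1)
    (hac : a ≤ c) (hdb : d ≤ b) : PerOn T a b g := by
  have main : ∀ n j, c - j ≤ n → a ≤ j → j + g ≤ b → T[j]? = T[j + g]? := by
    intro n
    induction n with
    | zero =>
      intro j h0 hj hjb
      exact perOn_extend_right hp hab hcd hwin hac hdb j (by omega) hjb
    | succ n ihn =>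
      intro j h0 hj hjb
      by_cases hc : c ≤ j
      · exact perOn_extend_right hp hab hcd hwin hac hdb j hc hjb
      · have e1 : T[j]? = T[j + p]? := hab j hj (by omega)
        have e2 : T[j + g]? = T[j + g + p]? := hab (j + g) (by omega) (by omega)
        have e3 : T[j + p]? = T[j + p + g]? := ihn (j + p) (by omega) (by omega) (by omega)
        rw [e1, e2, e3, show j + p + g = j + g + p by omega]
  exact fun j hj hjb => main c j (by omega) hj hjb

lemma run_left_max {T : List α} {a b A B : ℕ} (h : IsRun T a b)
    (hU : PerOn T A B (minPeriod (frag T a b))) (hA : A ≤ a) (hB : b ≤ B) : a ≤ A := by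
  by_contra hcon
  push_neg at hcon
  obtain ⟨hab, hb, hlen, hleft, hright⟩ := h
  set p := minPeriod (frag T a b) with hpdef
  have hp : 0 < p := minPeriod_pos _
  rcases hleft with h0 | hne
  · omega
  · exact hne (hU (a - 1) (by omega) (by omega))

lemma run_right_max {T : List α} {a b A B : ℕ} (h : IsRun T a b)
    (hU : PerOn T A B (minPeriod (frag T a b))) (hA : A ≤ a) (hB : b ≤ B)
    (hBlt : B < T.length) : B ≤ b := by
  by_contra hcon
  push_neg at hcon
  obtain ⟨hab, hb, hlen, hleft, hright⟩ := h
  set p := minPeriod (frag T a b) with hpdef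
  have hp : 0 < p := minPeriod_pos _
  rcases hright with h0 | hne
  · omega
  · apply hne
    have h2 := hU (b + 1 - p) (by omega) (by omega)
    rw [show b + 1 - p + p = b + 1 by omega] at h2
    exact h2.symm

lemma runs_eq_of_common_window {T : List α} {a1 b1 a2 b2 s L : ℕ}
    (h1 : IsRun T a1 b1) (h2 : IsRun T a2 b2)
    (hw1a : a1 ≤ s) (hw1b : s + L ≤ b1 + 1) (hw2a : a2 ≤ s) (hw2b : s + L ≤ b2 + 1)
    (hL : minPeriod (frag T a1 b1) + minPeriod (frag T a2 b2) ≤ L) :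
    a1 = a2 ∧ b1 = b2 := by
  set p1 := minPeriod (frag T a1 b1) with hp1def
  set p2 := minPeriod (frag T a2 b2) with hp2def
  have hp1 : 0 < p1 := minPeriod_pos _
  have hp2 : 0 < p2 := minPeriod_pos _
  have hper1 : PerOn T a1 b1 p1 := h1.perOn
  have hper2 : PerOn T a2 b2 p2 := h2.perOn
  have hlen1 : 2 * p1 ≤ b1 + 1 - a1 := h1.2.2.1
  have hlen2 : 2 * p2 ≤ b2 + 1 - a2 := h2.2.2.1
  have hwinper1 : PerOn T s (s + L - 1) p1 := hper1.mono hw1a (by omega)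
  have hwinper2 : PerOn T s (s + L - 1) p2 := hper2.mono hw2a (by omega)
  -- run 2 has period p1, run 1 has period p2
  have hext1 : PerOn T a2 b2 p1 :=
    perOn_extend hp2 hp1 hper2 hwinper1 (by omega) hw2a (by omega)
  have hext2 : PerOn T a1 b1 p2 :=
    perOn_extend hp1 hp2 hper1 hwinper2 (by omega) hw1a (by omega)
  have hle1 : p2 ≤ p1 := minPeriod_le ((isPeriod_frag_iff h2.2.1 h2.1 p1).2 ⟨hp1, hext1⟩)
  have hle2 : p1 ≤ p2 := minPeriod_le ((isPeriod_frag_iff h1.2.1 h1.1 p2).2 ⟨hp2, hext2⟩)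
  have hpeq : p1 = p2 := le_antisymm hle2 hle1
  -- union period
  have hU : PerOn T (min a1 a2) (max b1 b2) p1 := by
    intro j hj hjb
    by_cases hc1 : a1 ≤ j ∧ j + p1 ≤ b1
    · exact hper1 j hc1.1 hc1.2
    · have hc2 : a2 ≤ j ∧ j + p1 ≤ b2 := by omega
      exact hpeq ▸ hper2 j hc2.1 (hpeq ▸ hc2.2)
  have hU2 : PerOn T (min a1 a2) (max b1 b2) p2 := hpeq ▸ hU
  have hBlt : max b1 b2 < T.length := by
    have := h1.2.1; have := h2.2.1; omega
  have ha1 : a1 ≤ min a1 a2 := run_left_max h1 hU (by omega) (by omega)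
  have ha2 : a2 ≤ min a1 a2 := run_left_max h2 hU2 (by omega) (by omega)
  have hb1 : max b1 b2 ≤ b1 := run_right_max h1 hU (by omega) (by omega) hBlt
  have hb2 : max b1 b2 ≤ b2 := run_right_max h2 hU2 (by omega) (by omega) hBlt
  omega

lemma runs_finite (T : List α) : {ab : ℕ × ℕ | IsRun T ab.1 ab.2}.Finite := by
  apply Set.Finite.subset ((Set.finite_Iio T.length).prod (Set.finite_Iio T.length))
  rintro ⟨a, b⟩ h
  exact ⟨lt_of_le_of_lt h.1 h.2.1, h.2.1⟩

lemma class_count (T : List α) (i M L step K : ℕ) (hstep : 1 ≤ step)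
    (h1 : L ≤ 1 + K * step) (h2 : L + step ≤ 4 * M + 1) :
    {ab : ℕ × ℕ | IsRun T ab.1 ab.2 ∧
      4 * minPeriod (frag T ab.1 ab.2) ≤ ab.2 + 1 - ab.1 ∧
      ab.1 ≤ i ∧ i ≤ ab.2 ∧ M ≤ minPeriod (frag T ab.1 ab.2) ∧
      2 * minPeriod (frag T ab.1 ab.2) ≤ L}.ncard ≤ K + 1 := by
  set S := {ab : ℕ × ℕ | IsRun T ab.1 ab.2 ∧
      4 * minPeriod (frag T ab.1 ab.2) ≤ ab.2 + 1 - ab.1 ∧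
      ab.1 ≤ i ∧ i ≤ ab.2 ∧ M ≤ minPeriod (frag T ab.1 ab.2) ∧
      2 * minPeriod (frag T ab.1 ab.2) ≤ L} with hS
  have key : ∀ ab ∈ S, ab.1 + L ≤ i + 1 + (min K ((ab.2 - i) / step)) * step ∧
      i + (min K ((ab.2 - i) / step)) * step ≤ ab.2 := by
    rintro ⟨a, b⟩ ⟨hrun, hhp, hai, hib, hMp, hpL⟩
    have hM4 : 4 * M ≤ b + 1 - a := le_trans (by omega) hhp
    have hab : a ≤ b := hrun.1
    set q := (b - i) / step with hq
    have hdm : q * step + (b - i) % step = b - i := by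
      rw [hq, Nat.mul_comm]; exact Nat.div_add_mod _ _
    have hmod : (b - i) % step < step := Nat.mod_lt _ (by omega)
    by_cases hK : K ≤ q
    · have hkk : min K q = K := by omega
      have hmul : K * step ≤ q * step := Nat.mul_le_mul_right _ hK
      rw [hkk]
      omega
    · have hkk : min K q = q := by omega
      have hsucc : (q + 1) * step = q * step + step := by ring
      -- b - i < (q+1) * step
      rw [hkk]
      omega
  have hinj : Set.InjOn (fun ab : ℕ × ℕ => min K ((ab.2 - i) / step)) S := by
    rintro ⟨a1, b1⟩ hab1 ⟨a2, b2⟩ hab2 heq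
    simp only at heq
    obtain ⟨key11, key12⟩ := key _ hab1
    obtain ⟨key21, key22⟩ := key _ hab2
    rw [← heq] at key21 key22
    set k := min K ((b1 - i) / step) with hk
    obtain ⟨hrun1, hhp1, hai1, hib1, hMp1, hpL1⟩ := hab1
    obtain ⟨hrun2, hhp2, hai2, hib2, hMp2, hpL2⟩ := hab2
    have h := runs_eq_of_common_window hrun1 hrun2
      (s := i + 1 + k * step - L) (L := L)
      (by omega) (by omega) (by omega) (by omega) (by omega)
    exact Prod.ext h.1 h.2
  have := Set.ncard_le_ncard_of_injOn
    (fun ab : ℕ × ℕ => (⟨min K ((ab.2 - i) / step), by omega⟩ : Fin (K + 1)))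
    (fun a _ => Set.mem_univ _)
    (fun x hx y hy h => hinj hx hy (by simpa [Fin.ext_iff] using h))
    (Set.finite_univ)
  simpa [Set.ncard_univ] using this

lemma ncard_biUnion_le {γ : Type*} (n : ℕ) (f : ℕ → Set γ) :
    (⋃ j ∈ Finset.range n, f j).ncard ≤ ∑ j ∈ Finset.range n, (f j).ncard := by
  induction n with
  | zero => simp
  | succ n ih =>
    rw [Finset.sum_range_succ]
    have he : (⋃ j ∈ Finset.range (n + 1), f j) = (⋃ j ∈ Finset.range n, f j) ∪ f n := by
      rw [Finset.range_add_one]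
      simp [Set.biUnion_insert, Set.union_comm]
    rw [he]
    exact le_trans (Set.ncard_union_le _ _) (by omega)

/-- The class of hp-runs containing `i` with `M ≤ p` and `2p ≤ L`. -/
def Cls (T : List α) (i M L : ℕ) : Set (ℕ × ℕ) :=
  {ab : ℕ × ℕ | IsRun T ab.1 ab.2 ∧
      4 * minPeriod (frag T ab.1 ab.2) ≤ ab.2 + 1 - ab.1 ∧
      ab.1 ≤ i ∧ i ≤ ab.2 ∧ M ≤ minPeriod (frag T ab.1 ab.2) ∧
      2 * minPeriod (frag T ab.1 ab.2) ≤ L}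

lemma count_pos (T : List α) (i : ℕ) :
    {ab : ℕ × ℕ | IsRun T ab.1 ab.2 ∧
        4 * minPeriod (frag T ab.1 ab.2) ≤ ab.2 + 1 - ab.1 ∧
        ab.1 ≤ i ∧ i ≤ ab.2}.ncard ≤ 16 * (Nat.log 2 T.length + 1) := by
  set J := Nat.log 2 T.length with hJ
  set U := Cls T i 1 2 ∪ Cls T i 2 4 ∪ Cls T i 3 6 ∪
      ⋃ j ∈ Finset.range (J + 1), (Cls T i (4 * 2 ^ j) (12 * 2 ^ j) ∪
        Cls T i (6 * 2 ^ j) (16 * 2 ^ j)) with hU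
  have hsub : {ab : ℕ × ℕ | IsRun T ab.1 ab.2 ∧
        4 * minPeriod (frag T ab.1 ab.2) ≤ ab.2 + 1 - ab.1 ∧
        ab.1 ≤ i ∧ i ≤ ab.2} ⊆ U := by
    rintro ab ⟨hrun, hhp, hai, hib⟩
    set p := minPeriod (frag T ab.1 ab.2) with hp
    have hp0 : 0 < p := minPeriod_pos _
    have hplen : 4 * p ≤ T.length := by
      have := hrun.1; have := hrun.2.1; omega
    by_cases hsmall : p ≤ 3
    · rcases (show p = 1 ∨ p = 2 ∨ p = 3 by omega) with h | h | h
      · exact Or.inl (Or.inl (Or.inl ⟨hrun, hhp, hai, hib, by omega, by omega⟩))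
      · exact Or.inl (Or.inl (Or.inr ⟨hrun, hhp, hai, hib, by omega, by omega⟩))
      · exact Or.inl (Or.inr ⟨hrun, hhp, hai, hib, by omega, by omega⟩)
    · -- p ≥ 4
      set j := Nat.log 2 (p / 4) with hj
      have hx1 : 2 ^ j ≤ p / 4 := Nat.pow_log_le_self 2 (by omega)
      have hx2 : p / 4 < 2 ^ (j + 1) := Nat.lt_pow_succ_log_self (by norm_num) _
      rw [pow_succ] at hx2
      have hjJ : j < J + 1 := by
        have : j ≤ J := Nat.log_mono_right (by omega)
        omega
      refine Or.inr (Set.mem_biUnion (Finset.mem_range.2 hjJ) ?_)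
      by_cases hmid : 2 * p ≤ 12 * 2 ^ j
      · exact Or.inl ⟨hrun, hhp, hai, hib, by omega, hmid⟩
      · exact Or.inr ⟨hrun, hhp, hai, hib, by omega, by omega⟩
  have hUfin : U.Finite := by
    apply Set.Finite.subset (runs_finite T)
    rw [hU]
    rintro ab (((h | h) | h) | h)
    · exact h.1
    · exact h.1
    · exact h.1
    · simp only [Set.mem_iUnion, exists_prop] at h
      obtain ⟨j, _, h2 | h2⟩ := h
      · exact h2.1
      · exact h2.1
  refine le_trans (Set.ncard_le_ncard hsub hUfin) ?_
  have c1 : (Cls T i 1 2).ncard ≤ 1 + 1 :=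
    class_count T i 1 2 1 1 (by norm_num) (by norm_num) (by norm_num)
  have c2 : (Cls T i 2 4).ncard ≤ 2 + 1 :=
    class_count T i 2 4 2 2 (by norm_num) (by norm_num) (by norm_num)
  have c3 : (Cls T i 3 6).ncard ≤ 2 + 1 :=
    class_count T i 3 6 3 2 (by norm_num) (by norm_num) (by norm_num)
  have cbig : ∀ j : ℕ, (Cls T i (4 * 2 ^ j) (12 * 2 ^ j) ∪
      Cls T i (6 * 2 ^ j) (16 * 2 ^ j)).ncard ≤ 7 := by
    intro j
    have hx : 1 ≤ 2 ^ j := Nat.one_le_two_pow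
    have cA : (Cls T i (4 * 2 ^ j) (12 * 2 ^ j)).ncard ≤ 3 + 1 :=
      class_count T i (4 * 2 ^ j) (12 * 2 ^ j) (4 * 2 ^ j) 3 (by omega) (by omega) (by omega)
    have cB : (Cls T i (6 * 2 ^ j) (16 * 2 ^ j)).ncard ≤ 2 + 1 :=
      class_count T i (6 * 2 ^ j) (16 * 2 ^ j) (8 * 2 ^ j) 2 (by omega) (by omega) (by omega)
    exact le_trans (Set.ncard_union_le _ _) (by omega)
  have hbig : (⋃ j ∈ Finset.range (J + 1), (Cls T i (4 * 2 ^ j) (12 * 2 ^ j) ∪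
      Cls T i (6 * 2 ^ j) (16 * 2 ^ j))).ncard ≤ 7 * (J + 1) := by
    refine le_trans (ncard_biUnion_le _ _) ?_
    calc ∑ j ∈ Finset.range (J + 1), (Cls T i (4 * 2 ^ j) (12 * 2 ^ j) ∪
        Cls T i (6 * 2 ^ j) (16 * 2 ^ j)).ncard
        ≤ ∑ _j ∈ Finset.range (J + 1), 7 := Finset.sum_le_sum (fun j _ => cbig j)
      _ = 7 * (J + 1) := by simp [Finset.sum_const, Nat.mul_comm]
  rw [hU]
  refine le_trans (Set.ncard_union_le _ _) ?_
  have step2 := Set.ncard_union_le (Cls T i 1 2 ∪ Cls T i 2 4) (Cls T i 3 6)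
  have step3 := Set.ncard_union_le (Cls T i 1 2) (Cls T i 2 4)
  omega

lemma sum_lengths (T : List α) :
    ∑ᶠ ab ∈ {ab : ℕ × ℕ | IsRun T ab.1 ab.2 ∧
        4 * minPeriod (frag T ab.1 ab.2) ≤ ab.2 + 1 - ab.1},
      (ab.2 + 1 - ab.1) ≤ 16 * T.length * (Nat.log 2 T.length + 1) := by
  classical
  set S := {ab : ℕ × ℕ | IsRun T ab.1 ab.2 ∧
      4 * minPeriod (frag T ab.1 ab.2) ≤ ab.2 + 1 - ab.1} with hS
  have hfin : S.Finite := (runs_finite T).subset (fun ab h => h.1)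
  have h1 : ∑ᶠ ab ∈ S, (ab.2 + 1 - ab.1) = ∑ ab ∈ hfin.toFinset, (ab.2 + 1 - ab.1) := by
    exact finsum_mem_eq_finite_toFinset_sum _ hfin
  have h2 : ∀ ab ∈ hfin.toFinset, ab.2 + 1 - ab.1 =
      ∑ x ∈ Finset.range T.length, (if ab.1 ≤ x ∧ x ≤ ab.2 then 1 else 0) := by
    intro ab hab
    rw [Set.Finite.mem_toFinset] at hab
    have hb : ab.2 < T.length := hab.1.2.1
    have hfil : (Finset.range T.length).filter (fun x => ab.1 ≤ x ∧ x ≤ ab.2) =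
        Finset.Icc ab.1 ab.2 := by
      ext x
      simp only [Finset.mem_filter, Finset.mem_range, Finset.mem_Icc]
      omega
    rw [Finset.sum_boole, hfil, Nat.card_Icc]
    simp
  calc ∑ᶠ ab ∈ S, (ab.2 + 1 - ab.1)
      = ∑ ab ∈ hfin.toFinset, (ab.2 + 1 - ab.1) := h1
    _ = ∑ ab ∈ hfin.toFinset, ∑ x ∈ Finset.range T.length,
          (if ab.1 ≤ x ∧ x ≤ ab.2 then 1 else 0) := Finset.sum_congr rfl h2
    _ = ∑ x ∈ Finset.range T.length, ∑ ab ∈ hfin.toFinset,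
          (if ab.1 ≤ x ∧ x ≤ ab.2 then 1 else 0) := Finset.sum_comm
    _ ≤ ∑ _x ∈ Finset.range T.length, 16 * (Nat.log 2 T.length + 1) := by
        refine Finset.sum_le_sum (fun x _ => ?_)
        have hc : ((hfin.toFinset.filter (fun ab : ℕ × ℕ => ab.1 ≤ x ∧ x ≤ ab.2)) : Set (ℕ × ℕ)) =
            {ab : ℕ × ℕ | IsRun T ab.1 ab.2 ∧
              4 * minPeriod (frag T ab.1 ab.2) ≤ ab.2 + 1 - ab.1 ∧
              ab.1 ≤ x ∧ x ≤ ab.2} := by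
          ext ab
          simp only [Finset.coe_filter, Set.Finite.mem_toFinset, Set.mem_setOf_eq, hS, and_assoc]
        rw [Finset.sum_boole]
        push_cast
        calc (hfin.toFinset.filter (fun ab : ℕ × ℕ => ab.1 ≤ x ∧ x ≤ ab.2)).card
            = ((hfin.toFinset.filter (fun ab : ℕ × ℕ => ab.1 ≤ x ∧ x ≤ ab.2)) : Set (ℕ × ℕ)).ncard :=
              (Set.ncard_coe_finset _).symm
          _ ≤ 16 * (Nat.log 2 T.length + 1) := by rw [hc]; exact count_pos T x
    _ = 16 * T.length * (Nat.log 2 T.length + 1) := by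
        rw [Finset.sum_const, Finset.card_range, smul_eq_mul]; ring

lemma stmt_i (T : List α) (i m : ℕ) (hm : 0 < m) :
    {ab : ℕ × ℕ | IsRun T ab.1 ab.2 ∧
        4 * minPeriod (frag T ab.1 ab.2) ≤ ab.2 + 1 - ab.1 ∧
        ab.1 ≤ i ∧ i ≤ ab.2 ∧
        m ≤ minPeriod (frag T ab.1 ab.2) ∧
        2 * minPeriod (frag T ab.1 ab.2) < 3 * m}.ncard ≤ 4 := by
  have hcc := class_count T i m (3 * m) m 3 (by omega) (by omega) (by omega)
  have hfin : {ab : ℕ × ℕ | IsRun T ab.1 ab.2 ∧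
      4 * minPeriod (frag T ab.1 ab.2) ≤ ab.2 + 1 - ab.1 ∧
      ab.1 ≤ i ∧ i ≤ ab.2 ∧ m ≤ minPeriod (frag T ab.1 ab.2) ∧
      2 * minPeriod (frag T ab.1 ab.2) ≤ 3 * m}.Finite :=
    (runs_finite T).subset (fun ab h => h.1)
  have hsub := Set.ncard_le_ncard
    (show {ab : ℕ × ℕ | IsRun T ab.1 ab.2 ∧
        4 * minPeriod (frag T ab.1 ab.2) ≤ ab.2 + 1 - ab.1 ∧
        ab.1 ≤ i ∧ i ≤ ab.2 ∧ m ≤ minPeriod (frag T ab.1 ab.2) ∧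
        2 * minPeriod (frag T ab.1 ab.2) < 3 * m} ⊆
      {ab : ℕ × ℕ | IsRun T ab.1 ab.2 ∧
        4 * minPeriod (frag T ab.1 ab.2) ≤ ab.2 + 1 - ab.1 ∧
        ab.1 ≤ i ∧ i ≤ ab.2 ∧ m ≤ minPeriod (frag T ab.1 ab.2) ∧
        2 * minPeriod (frag T ab.1 ab.2) ≤ 3 * m}
      from fun ab h => ⟨h.1, h.2.1, h.2.2.1, h.2.2.2.1, h.2.2.2.2.1, le_of_lt h.2.2.2.2.2⟩)
    hfin
  omega

/-- (i) For any position `i` of `T` and any positive even `m`, there are at most `4`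
highly periodic runs `R` containing `i` with `m ≤ per(R) < (3/2)·m`.
(ii) Consequently each position is contained in `O(log n)` highly periodic runs, and
(iii) the sum of the lengths of all highly periodic runs is `O(n log n)`. -/
theorem stmt4 :
    (∀ (α : Type) (T : List α) (i m : ℕ), Even m → 0 < m →
      {ab : ℕ × ℕ | IsRun T ab.1 ab.2 ∧
          4 * minPeriod (frag T ab.1 ab.2) ≤ ab.2 + 1 - ab.1 ∧
          ab.1 ≤ i ∧ i ≤ ab.2 ∧
          m ≤ minPeriod (frag T ab.1 ab.2) ∧
          2 * minPeriod (frag T ab.1 ab.2) < 3 * m}.ncard ≤ 4) ∧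
    (∃ C : ℕ, ∀ (α : Type) (T : List α) (i : ℕ),
      {ab : ℕ × ℕ | IsRun T ab.1 ab.2 ∧
          4 * minPeriod (frag T ab.1 ab.2) ≤ ab.2 + 1 - ab.1 ∧
          ab.1 ≤ i ∧ i ≤ ab.2}.ncard ≤ C * (Nat.log 2 T.length + 1)) ∧
    (∃ C : ℕ, ∀ (α : Type) (T : List α),
      ∑ᶠ ab ∈ {ab : ℕ × ℕ | IsRun T ab.1 ab.2 ∧
          4 * minPeriod (frag T ab.1 ab.2) ≤ ab.2 + 1 - ab.1},
        (ab.2 + 1 - ab.1) ≤ C * T.length * (Nat.log 2 T.length + 1)) :=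
  ⟨fun _ T i m _ hm => stmt_i T i m hm,
   ⟨16, fun _ T i => count_pos T i⟩,
   ⟨16, fun _ T => by simpa [Nat.mul_assoc] using sum_lengths T⟩⟩
end helpers
end

section
/- A periodic string with Lyndon-root representation (L, r, a, b) occurs in a periodic string with representation (L, r', a', b') (same Lyndon root L) if and only if: (1) r = r', a ≤ a', and b ≤ b'; or (2) r = r' - 1 and a ≤ a'; or (3) r = r' - 1 and b ≤ b'; or (4) r ≤ r' - 2. -/
/-- The Lyndon-root representation `(L, r, a, b)`: the string
`L[|L|-a+1..|L|] · L^r · L[1..b]`. -/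
def rep {α : Type*} (L : List α) (r a b : ℕ) : List α :=
  L.drop (L.length - a) ++ listPow L r ++ L.take b

lemma listPow_length {α : Type*} (L : List α) (k : ℕ) :
    (listPow L k).length = k * L.length := by
  simp [listPow]

lemma listPow_succ {α : Type*} (L : List α) (k : ℕ) :
    listPow L (k+1) = L ++ listPow L k := by
  rw [listPow, listPow, List.replicate_succ, List.flatten_cons]

lemma listPow_add {α : Type*} (L : List α) (m k : ℕ) :
    listPow L (m+k) = listPow L m ++ listPow L k := by
  rw [listPow, listPow, listPow, List.replicate_add, List.flatten_append]

lemma drop_listPow {α : Type*} (L : List α) (M q : ℕ) (h : q ≤ M) :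
    (listPow L M).drop (q * L.length) = listPow L (M - q) := by
  have : M = q + (M - q) := by omega
  rw [this, listPow_add, List.drop_append_of_le_length (by simp [listPow_length])]
  simp [listPow_length]

lemma listPow_zero {α : Type*} (L : List α) : listPow L 0 = [] := rfl
lemma listPow_one {α : Type*} (L : List α) : listPow L 1 = L := by
  simp [listPow]

lemma comm_pow_aux {α : Type*} : ∀ (n : ℕ) (x y : List α),
    x.length + y.length ≤ n → x ++ y = y ++ x →
    ∃ (z : List α) (k m : ℕ), x = listPow z k ∧ y = listPow z m := by
  intro n
  induction n with
  | zero =>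
    intro x y hn _
    have hx : x = [] := by
      cases x <;> simp_all
    have hy : y = [] := by
      cases y <;> simp_all
    exact ⟨[], 0, 0, by simp [hx, listPow_zero], by simp [hy, listPow_zero]⟩
  | succ n ih =>
    intro x y hn h
    rcases eq_or_ne x [] with hx | hx
    · exact ⟨y, 0, 1, by simp [hx, listPow_zero], (listPow_one y).symm⟩
    rcases eq_or_ne y [] with hy | hy
    · exact ⟨x, 1, 0, (listPow_one x).symm, by simp [hy, listPow_zero]⟩
    rcases le_total x.length y.length with hle | hle
    · -- x is a prefix of y
      have hx' : x = y.take x.length := by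
        have := congrArg (List.take x.length) h
        rwa [List.take_left, List.take_append_of_le_length hle] at this
      set y' := y.drop x.length with hy'
      have hyd : y = x ++ y' := by
        conv_lhs => rw [← List.take_append_drop x.length y, ← hx']
      have h2 : x ++ y' = y' ++ x := by
        have : x ++ (x ++ y') = (x ++ y') ++ x := by rw [← hyd]; exact h
        rw [List.append_assoc] at this
        exact List.append_cancel_left this
      have hxpos : 0 < x.length := List.length_pos_iff.mpr hx
      have hlen : x.length + y'.length ≤ n := by
        have : y'.length = y.length - x.length := by simp [hy']
        omega
      obtain ⟨z, k, m, hzx, hzy⟩ := ih x y' hlen h2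
      exact ⟨z, k, k + m, hzx, by rw [hyd, hzx, hzy, ← listPow_add]⟩
    · -- y is a prefix of x
      have hy'' : y = x.take y.length := by
        have := congrArg (List.take y.length) h
        rw [List.take_left, List.take_append_of_le_length hle] at this
        exact this.symm
      set x' := x.drop y.length with hx'
      have hxd : x = y ++ x' := by
        conv_lhs => rw [← List.take_append_drop y.length x, ← hy'']
      have h2 : x' ++ y = y ++ x' := by
        have h3 : (y ++ x') ++ y = y ++ (y ++ x') := by rw [← hxd]; exact h
        rw [List.append_assoc] at h3
        exact List.append_cancel_left h3
      have hypos : 0 < y.length := List.length_pos_iff.mpr hy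
      have hlen : x'.length + y.length ≤ n := by
        have : x'.length = x.length - y.length := by simp [hx']
        omega
      obtain ⟨z, k, m, hzx, hzy⟩ := ih x' y hlen h2
      exact ⟨z, m + k, m, by rw [hxd, hzx, hzy, ← listPow_add], hzy⟩


lemma frag_pow {α : Type*} (L : List α) (c r a b M : ℕ)
    (hM : c + r + 2 ≤ M) (ha : a ≤ L.length) (hb : b ≤ L.length) :
    ((listPow L M).drop (c * L.length + (L.length - a))).take (a + r * L.length + b)
      = rep L r a b := by
  set n := L.length with hn
  have h1 : (listPow L M).drop (c * n + (n - a))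
      = ((listPow L M).drop (c * n)).drop (n - a) := by
    rw [List.drop_drop]
  rw [h1, drop_listPow L M c (by omega)]
  have h2 : M - c = 1 + (M - c - 1) := by omega
  rw [h2, listPow_add, listPow_one,
    List.drop_append_of_le_length (by omega)]
  have h3 : (L.drop (n - a)).length = a := by
    rw [List.length_drop]; omega
  have h4 : a + r * n + b = (L.drop (n - a)).length + (r * n + b) := by omega
  rw [h4, List.take_length_add_append]
  have h5 : M - c - 1 = r + (M - c - 1 - r) := by omega
  rw [h5, listPow_add]
  have h6 : r * n + b = (listPow L r).length + b := by rw [listPow_length]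
  rw [h6, List.take_length_add_append]
  have h7 : M - c - 1 - r = 1 + (M - c - 1 - r - 1) := by omega
  rw [h7, listPow_add, listPow_one, List.take_append_of_le_length hb, rep,
    List.append_assoc]

lemma rep_length {α : Type*} (L : List α) (r a b : ℕ) (ha : a ≤ L.length)
    (hb : b ≤ L.length) :
    (rep L r a b).length = a + r * L.length + b := by
  simp [rep, listPow_length, Nat.min_eq_left hb]
  omega

lemma sync {α : Type*} (L : List α) (hL : L ≠ [])
    (hprim : ∀ (V : List α) (k : ℕ), 2 ≤ k → L ≠ listPow V k)
    (M p : ℕ) (hp : ((listPow L M).drop p).take L.length = L)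
    (hple : p + L.length ≤ M * L.length) : L.length ∣ p := by
  set n := L.length with hn
  have npos : 0 < n := List.length_pos_iff.mpr hL
  set q := p / n with hq
  set s := p % n with hs
  have hps : p = q * n + s := by
    rw [hq, hs, Nat.mul_comm]; exact (Nat.div_add_mod p n).symm
  have hslt : s < n := Nat.mod_lt _ npos
  rcases Nat.eq_zero_or_pos s with hs0 | hs0
  · exact ⟨q, by rw [Nat.mul_comm]; omega⟩
  exfalso
  have hqM : q ≤ M := by
    by_contra hc
    push_neg at hc
    have h1 : (M + 1) * n ≤ q * n := Nat.mul_le_mul_right n hc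
    rw [Nat.add_mul, Nat.one_mul] at h1
    omega
  have hdrop : (listPow L M).drop p = ((listPow L M).drop (q * n)).drop s := by
    rw [List.drop_drop, ← hps]
  rw [hdrop, drop_listPow L M q hqM] at hp
  have hrem : s + n ≤ (M - q) * n := by
    have h1 : (M - q) * n = M * n - q * n := by
      rw [Nat.sub_mul]
    have h2 : q * n ≤ M * n := Nat.mul_le_mul_right n hqM
    omega
  have hMq2 : 2 ≤ M - q := by
    by_contra hc
    push_neg at hc
    interval_cases h : (M - q) <;> omega
  have hsplit : M - q = 1 + (1 + (M - q - 2)) := by omega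
  rw [hsplit, listPow_add, listPow_add, listPow_one] at hp
  rw [List.drop_append_of_le_length (by omega)] at hp
  have hlds : (L.drop s).length = n - s := by rw [List.length_drop]
  have hnsplit : n = (L.drop s).length + s := by omega
  rw [hnsplit, List.take_length_add_append, List.take_append_of_le_length (le_of_lt hslt)] at hp
  -- hp : L.drop s ++ L.take s = L
  have hcomm : L.drop s ++ L.take s = L.take s ++ L.drop s := by
    rw [hp, List.take_append_drop]
  have hts : (L.take s).length = s := by rw [List.length_take]; omega
  obtain ⟨z, k, m, hzk, hzm⟩ := comm_pow_aux n (L.drop s) (L.take s)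
    (by omega) hcomm
  have hLz : L = listPow z (m + k) := by
    rw [listPow_add, ← hzm, ← hzk]
    exact (List.take_append_drop s L).symm
  have hk1 : 1 ≤ k := by
    rcases Nat.eq_zero_or_pos k with h0 | h0
    · exfalso
      have h2 : L.drop s = [] := by rw [hzk, h0, listPow_zero]
      have h3 := congrArg List.length h2
      rw [hlds, List.length_nil] at h3
      omega
    · exact h0
  have hm1 : 1 ≤ m := by
    rcases Nat.eq_zero_or_pos m with h0 | h0
    · exfalso
      have h2 : L.take s = [] := by rw [hzm, h0, listPow_zero]
      have h3 := congrArg List.length h2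
      rw [hts, List.length_nil] at h3
      omega
    · exact h0
  exact hprim z (m + k) (by omega) hLz

lemma take_drop_infix {α : Type*} (x : List α) (d d' len len' : ℕ)
    (hd : d' ≤ d) (hlen : d + len ≤ d' + len') :
    (x.drop d).take len <:+: (x.drop d').take len' := by
  have hA : d' + (d - d') = d := Nat.add_sub_cancel' hd
  have hB : len ≤ len' - (d - d') := by omega
  have key : (x.drop d).take len = (((x.drop d').take len').drop (d - d')).take len := by
    rw [List.drop_take, List.drop_drop, hA, List.take_take, min_eq_left hB]
  rw [key]
  exact ((List.take_prefix _ _).isInfix).trans ((List.drop_suffix _ _).isInfix)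

lemma infix_helper {α : Type*} (L : List α) (r a b r' a' b' c : ℕ)
    (ha : a ≤ L.length) (hb : b ≤ L.length)
    (ha' : a' ≤ L.length) (hb' : b' ≤ L.length)
    (hM : c + r + 2 ≤ r' + 3)
    (hd : L.length - a' ≤ c * L.length + (L.length - a))
    (hlen : c * L.length + (L.length - a) + (a + r * L.length + b)
      ≤ (L.length - a') + (a' + r' * L.length + b')) :
    rep L r a b <:+: rep L r' a' b' := by
  have e' : rep L r' a' b' = ((listPow L (r' + 3)).drop (L.length - a')).take
      (a' + r' * L.length + b') := by
    have h0 := frag_pow L 0 r' a' b' (r' + 3) (by omega) ha' hb'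
    rw [Nat.zero_mul, Nat.zero_add] at h0
    exact h0.symm
  have e : rep L r a b = ((listPow L (r' + 3)).drop (c * L.length + (L.length - a))).take
      (a + r * L.length + b) :=
    (frag_pow L c r a b (r' + 3) hM ha hb).symm
  rw [e, e']
  exact take_drop_infix _ _ _ _ _ hd hlen

/-- A periodic string `(L, r, a, b)` occurs in a periodic string `(L, r', a', b')`
with the same (primitive) Lyndon root `L` iff (1) `r = r'`, `a ≤ a'`, `b ≤ b'`; or
(2) `r = r' - 1` and `a ≤ a'`; or (3) `r = r' - 1` and `b ≤ b'`; or (4) `r ≤ r' - 2`. -/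
theorem stmt13 {α : Type*} (L : List α) (r a b r' a' b' : ℕ)
    (hL : L ≠ []) (hprim : ∀ (V : List α) (k : ℕ), 2 ≤ k → L ≠ listPow V k)
    (ha : a < L.length) (hb : b < L.length)
    (ha' : a' < L.length) (hb' : b' < L.length)
    (hr : 1 ≤ r) (hr' : 1 ≤ r') :
    rep L r a b <:+: rep L r' a' b' ↔
      ((r = r' ∧ a ≤ a' ∧ b ≤ b') ∨ (r + 1 = r' ∧ a ≤ a') ∨
       (r + 1 = r' ∧ b ≤ b') ∨ (r + 2 ≤ r')) := by
  set n := L.length with hn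
  have npos : 0 < n := List.length_pos_iff.mpr hL
  constructor
  · intro hinf
    obtain ⟨s, t, hst⟩ := hinf
    set i := s.length with hi
    have hlr : (rep L r a b).length = a + r * n + b :=
      rep_length L r a b (le_of_lt ha) (le_of_lt hb)
    have hlr' : (rep L r' a' b').length = a' + r' * n + b' :=
      rep_length L r' a' b' (le_of_lt ha') (le_of_lt hb')
    have hlent := congrArg List.length hst
    rw [List.length_append, List.length_append, hlr, hlr'] at hlent
    have h2 : i + (a + r * n + b) ≤ a' + r' * n + b' := by linarith [hlent]
    have e' : rep L r' a' b' = ((listPow L (r' + 3)).drop (n - a')).take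
        (a' + r' * n + b') := by
      have h0 := frag_pow L 0 r' a' b' (r' + 3) (by omega) (le_of_lt ha') (le_of_lt hb')
      rw [Nat.zero_mul, Nat.zero_add] at h0
      exact h0.symm
    have h1 : (rep L r' a' b').drop i = rep L r a b ++ t := by
      rw [← hst, List.append_assoc, hi, List.drop_left]
    rw [e', List.drop_take, List.drop_drop] at h1
    have hminle : a + r * n + b ≤ (a' + r' * n + b') - i :=
      Nat.le_sub_of_add_le (by linarith)
    have e2 : ((listPow L (r' + 3)).drop (n - a' + i)).take (a + r * n + b)
        = rep L r a b := by
      have h3 := congrArg (List.take (a + r * n + b)) h1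
      rw [List.take_take, min_eq_left hminle] at h3
      rw [h3, ← hlr, List.take_left]
    have hnr : n ≤ r * n := Nat.le_mul_of_pos_left n hr
    have hrd : ((rep L r a b).drop a).take n = L := by
      have hx : rep L r a b = L.drop (n - a) ++ (listPow L r ++ L.take b) := by
        rw [rep, List.append_assoc]
      rw [hx, List.drop_left' (by rw [List.length_drop, ← hn]; omega)]
      rw [show r = 1 + (r - 1) by omega, listPow_add, listPow_one, List.append_assoc]
      exact List.take_left' hn.symm
    have e3 : ((listPow L (r' + 3)).drop ((n - a' + i) + a)).take n = L := by
      have h4 := congrArg (fun l => (l.drop a).take n) e2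
      rw [List.drop_take, List.drop_drop, List.take_take,
        min_eq_left (show n ≤ a + r * n + b - a from Nat.le_sub_of_add_le (by linarith)),
        hrd] at h4
      exact h4
    have hple : ((n - a' + i) + a) + n ≤ (r' + 3) * n := by
      have hexp : (r' + 3) * n = r' * n + 3 * n := by rw [Nat.add_mul]
      have hsub : n - a' ≤ n := Nat.sub_le n a'
      linarith [h2]
    obtain ⟨k, hk⟩ := sync L hL hprim (r' + 3) ((n - a' + i) + a) e3 hple
    have hk1 : 1 ≤ k := by
      rcases Nat.eq_zero_or_pos k with h0 | h0
      · rw [h0, Nat.mul_zero] at hk; omega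
      · exact h0
    have hkj : n * k = n * (k - 1) + n := by
      calc n * k = n * (k - 1 + 1) := by rw [Nat.sub_add_cancel hk1]
        _ = n * (k - 1) + n := Nat.mul_succ n (k - 1)
    have hja : i + a = n * (k - 1) + a' := by
      have h5 : n - a' + a' = n := Nat.sub_add_cancel (le_of_lt ha')
      rw [hkj] at hk
      linarith [hk, h5]
    have hle2 : n * (k - 1) + r * n + b ≤ r' * n + b' := by linarith [h2, hja]
    have hkey : (k - 1) + r ≤ r' := by
      by_contra hc
      push_neg at hc
      have h6 : (r' + 1) * n ≤ ((k - 1) + r) * n := Nat.mul_le_mul_right n (by omega)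
      rw [Nat.add_mul, Nat.add_mul, Nat.one_mul] at h6
      have h7 : (k - 1) * n = n * (k - 1) := Nat.mul_comm _ _
      linarith [hb']
    rcases Nat.eq_zero_or_pos (k - 1) with hj0 | hj1
    · rw [hj0, Nat.mul_zero, Nat.zero_add] at hja hle2
      have haa : a ≤ a' := by omega
      by_cases h : r = r'
      · subst h
        exact Or.inl ⟨rfl, haa, by linarith [hle2]⟩
      by_cases h' : r + 1 = r'
      · exact Or.inr (Or.inl ⟨h', haa⟩)
      · exact Or.inr (Or.inr (Or.inr (by omega)))
    · by_cases h : r + 1 = r'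
      · have hjeq : k - 1 = 1 := by omega
        rw [hjeq, Nat.mul_one] at hle2
        have hbb : b ≤ b' := by
          have hexp : r' * n = r * n + n := by rw [← h, Nat.add_mul, Nat.one_mul]
          linarith
        exact Or.inr (Or.inr (Or.inl ⟨h, hbb⟩))
      · exact Or.inr (Or.inr (Or.inr (by omega)))
  · intro hcase
    have f1 : n - a + a = n := Nat.sub_add_cancel (le_of_lt ha)
    have f2 : n - a' + a' = n := Nat.sub_add_cancel (le_of_lt ha')
    rcases hcase with ⟨hrr', haa, hbb⟩ | ⟨hrr', haa⟩ | ⟨hrr', hbb⟩ | hrr'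
    · subst hrr'
      apply infix_helper L r a b r a' b' 0 (le_of_lt ha) (le_of_lt hb)
        (le_of_lt ha') (le_of_lt hb') (by omega)
      · rw [← hn, Nat.zero_mul, Nat.zero_add]
        exact Nat.sub_le_sub_left haa n
      · rw [← hn, Nat.zero_mul, Nat.zero_add]
        linarith [f1, f2, hbb]
    · subst hrr'
      apply infix_helper L r a b (r + 1) a' b' 0 (le_of_lt ha) (le_of_lt hb)
        (le_of_lt ha') (le_of_lt hb') (by omega)
      · rw [← hn, Nat.zero_mul, Nat.zero_add]
        exact Nat.sub_le_sub_left haa n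
      · rw [← hn, Nat.zero_mul, Nat.zero_add]
        have hexp : (r + 1) * n = r * n + n := by rw [Nat.add_mul, Nat.one_mul]
        linarith [f1, f2, hb]
    · subst hrr'
      apply infix_helper L r a b (r + 1) a' b' 1 (le_of_lt ha) (le_of_lt hb)
        (le_of_lt ha') (le_of_lt hb') (by omega)
      · rw [← hn]; omega
      · rw [← hn, Nat.one_mul]
        have hexp : (r + 1) * n = r * n + n := by rw [Nat.add_mul, Nat.one_mul]
        linarith [f1, f2, hbb]
    · apply infix_helper L r a b r' a' b' 1 (le_of_lt ha) (le_of_lt hb)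
        (le_of_lt ha') (le_of_lt hb') (by omega)
      · rw [← hn]; omega
      · rw [← hn, Nat.one_mul]
        have hmul : (r + 3) * n ≤ (r' + 1) * n := Nat.mul_le_mul_right n (by omega)
        rw [Nat.add_mul, Nat.add_mul, Nat.one_mul] at hmul
        linarith [f1, f2, hb]
end

section
/- Let F1, F2, F3 be three consecutive fragments of T with |F1| = |F3| = x and |F2| = y ≥ 8x, and let D be a dictionary of patterns none of which is highly periodic (per(P) > |P|/4 for all P ∈ D). Then the number of distinct patterns P ∈ D that have an occurrence starting in F1 and ending in F3 but occur in neither F1F2 nor F2F3 equals Count(F1F2F3) - Count(F1F2) - Count(F2F3) + Count(F2), where Count(S) is the total number of occurrences of patterns of D in S (counted with multiplicity). -/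
/-- `Count(S)`: the total number of occurrences of patterns of `D` in `S`. -/
noncomputable def CountOcc {α : Type*} (D : Finset (List α)) (S : List α) : ℕ :=
  ∑ P ∈ D, {i : ℕ | OccursAt P S i}.ncard

namespace Stmt14Aux

variable {α : Type*}

theorem occursAt_iff (P S : List α) (i : ℕ) :
    OccursAt P S i ↔ i + P.length ≤ S.length ∧ ∀ k, k < P.length → S[i + k]? = P[k]? := by
  constructor
  · rintro ⟨h1, h2⟩
    refine ⟨h2, fun k hk => ?_⟩
    conv_rhs => rw [← h1]
    rw [List.getElem?_take, if_pos hk, List.getElem?_drop]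
  · rintro ⟨h2, h1⟩
    refine ⟨?_, h2⟩
    apply List.ext_getElem?
    intro k
    by_cases hk : k < P.length
    · rw [List.getElem?_take, if_pos hk, List.getElem?_drop, h1 k hk]
    · rw [List.getElem?_take, if_neg hk, eq_comm, List.getElem?_eq_none_iff]
      omega

theorem occ_sub_left {A B P : List α} {i : ℕ} (h : i + P.length ≤ A.length) :
    OccursAt P (A ++ B) i ↔ OccursAt P A i := by
  rw [occursAt_iff, occursAt_iff]
  have hl : (A ++ B).length = A.length + B.length := by simp
  constructor
  · rintro ⟨-, h2⟩
    refine ⟨h, fun k hk => ?_⟩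
    rw [← h2 k hk, List.getElem?_append, if_pos (by omega)]
  · rintro ⟨-, h2⟩
    refine ⟨by omega, fun k hk => ?_⟩
    rw [List.getElem?_append, if_pos (by omega), h2 k hk]

theorem occ_shift {A B P : List α} {j : ℕ} :
    OccursAt P (A ++ B) (A.length + j) ↔ OccursAt P B j := by
  rw [occursAt_iff, occursAt_iff]
  have hl : (A ++ B).length = A.length + B.length := by simp
  constructor
  · rintro ⟨h1, h2⟩
    refine ⟨by omega, fun k hk => ?_⟩
    have h3 := h2 k hk
    rwa [List.getElem?_append_right (by omega),
      (by omega : A.length + j + k - A.length = j + k)] at h3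
  · rintro ⟨h1, h2⟩
    refine ⟨by omega, fun k hk => ?_⟩
    rw [List.getElem?_append_right (by omega),
      (by omega : A.length + j + k - A.length = j + k), h2 k hk]

theorem infix_iff_occ (P Q : List α) : P <:+: Q ↔ ∃ i, OccursAt P Q i := by
  constructor
  · rintro ⟨s, t, rfl⟩
    refine ⟨s.length, ?_, by simp⟩
    rw [List.append_assoc, List.drop_left]
    exact List.take_left
  · rintro ⟨i, h1, h2⟩
    rw [← h1]
    exact ((List.take_prefix _ _).isInfix).trans (List.drop_suffix i Q).isInfix

theorem no_close_occs {P S : List α} (hP : ¬ 4 * minPeriod P ≤ P.length)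
    {i d : ℕ} (hd : 0 < d) (h4 : 4 * d ≤ P.length)
    (h1 : OccursAt P S i) (h2 : OccursAt P S (i + d)) : False := by
  apply hP
  have hper : IsPeriod P d := by
    refine ⟨hd, fun k hk => ?_⟩
    have e1 := ((occursAt_iff P S i).1 h1).2 (k + d) hk
    have e2 := ((occursAt_iff P S (i + d)).1 h2).2 k (by omega)
    rw [(by omega : i + (k + d) = i + d + k)] at e1
    rw [← e1, ← e2]
  have hle : minPeriod P ≤ d := Nat.sInf_le hper
  omega

open Classical in
theorem ncard_occ (P S : List α) {n : ℕ} (hn : S.length < n) :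
    {i | OccursAt P S i}.ncard
      = ((Finset.range n).filter (fun i => OccursAt P S i)).card := by
  rw [← Set.ncard_coe_finset]
  congr 1
  ext i
  simp only [Finset.coe_filter, Finset.mem_range, Set.mem_setOf_eq]
  exact ⟨fun h => ⟨by have := h.2; omega, h⟩, fun h => h.2⟩

theorem filter_ie (U : Finset ℕ) (p q : ℕ → Prop)
    [DecidablePred p] [DecidablePred q] :
    U.card + (U.filter (fun i => p i ∧ q i)).card
      = (U.filter p).card + (U.filter q).card
        + (U.filter (fun i => ¬ p i ∧ ¬ q i)).card := by
  classical
  have h1 := Finset.card_filter_add_card_filter_not (s := U) p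
  have h2 := Finset.card_filter_add_card_filter_not
    (s := U.filter (fun i => ¬ p i)) q
  have h3 := Finset.card_filter_add_card_filter_not
    (s := U.filter q) p
  rw [Finset.filter_filter, Finset.filter_filter] at h2
  rw [Finset.filter_filter, Finset.filter_filter] at h3
  have e1 : U.filter (fun a => q a ∧ p a) = U.filter (fun i => p i ∧ q i) := by
    apply Finset.filter_congr; intro x _; simp [and_comm]
  have e2 : U.filter (fun a => q a ∧ ¬ p a) = U.filter (fun a => ¬ p a ∧ q a) := by
    apply Finset.filter_congr; intro x _; simp [and_comm]
  have e3 : U.filter (fun a => ¬ p a ∧ ¬ q a) = U.filter (fun i => ¬ p i ∧ ¬ q i) := rfl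
  rw [e1, e2] at h3
  omega

end Stmt14Aux

open Stmt14Aux in
/-- For consecutive fragments `F1 F2 F3` with `|F1| = |F3|`, `|F2| ≥ 8·|F1|`, and a
dictionary with no highly periodic pattern, the number of distinct patterns with an
occurrence starting in `F1` and ending in `F3` that occur in neither `F1F2` nor
`F2F3` equals `Count(F1F2F3) - Count(F1F2) - Count(F2F3) + Count(F2)`. -/
theorem stmt14 {α : Type*} (D : Finset (List α)) (F1 F2 F3 : List α)
    (hx : F1.length = F3.length) (hy : 8 * F1.length ≤ F2.length)
    (hD : ∀ P ∈ D, P ≠ [] ∧ ¬ (4 * minPeriod P ≤ P.length)) :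
    {P : List α | P ∈ D ∧
        (∃ s, OccursAt P (F1 ++ F2 ++ F3) s ∧ s < F1.length ∧
          F1.length + F2.length < s + P.length) ∧
        ¬ (P <:+: F1 ++ F2) ∧ ¬ (P <:+: F2 ++ F3)}.ncard
      + CountOcc D (F1 ++ F2) + CountOcc D (F2 ++ F3)
      = CountOcc D (F1 ++ F2 ++ F3) + CountOcc D F2 := by
  classical
  set x := F1.length with hx1
  set y := F2.length with hy1
  set S : List α := F1 ++ F2 ++ F3 with hS
  have hSlen : S.length = x + y + x := by
    rw [hS]; simp only [List.length_append]; omega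
  set N : ℕ := S.length + 1 with hN
  set cond : List α → Prop := fun P =>
    (∃ s, OccursAt P S s ∧ s < x ∧ x + y < s + P.length) ∧
      ¬ (P <:+: F1 ++ F2) ∧ ¬ (P <:+: F2 ++ F3) with hcond
  -- per-pattern identity
  have key : ∀ P ∈ D,
      {i | OccursAt P S i}.ncard + {i | OccursAt P F2 i}.ncard
        = {i | OccursAt P (F1 ++ F2) i}.ncard + {i | OccursAt P (F2 ++ F3) i}.ncard
          + (if cond P then 1 else 0) := by
    intro P hPD
    obtain ⟨-, hPper⟩ := hD P hPD
    rw [ncard_occ P S (n := N) (by omega), ncard_occ P F2 (n := N) (by omega),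
      ncard_occ P (F1 ++ F2) (n := N) (by simp only [List.length_append]; omega),
      ncard_occ P (F2 ++ F3) (n := N) (by simp only [List.length_append]; omega)]
    set U : Finset ℕ := (Finset.range N).filter (fun i => OccursAt P S i) with hU
    have hie := filter_ie U (fun i => i + P.length ≤ x + y) (fun i => x ≤ i)
    -- identify the pieces
    have e12 : U.filter (fun i => i + P.length ≤ x + y)
        = (Finset.range N).filter (fun i => OccursAt P (F1 ++ F2) i) := by
      ext i
      simp only [hU, Finset.filter_filter, Finset.mem_filter, Finset.mem_range]
      constructor
      · rintro ⟨hiN, hocc, hp⟩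
        exact ⟨hiN, (occ_sub_left (A := F1 ++ F2) (B := F3) (by simp; omega)).1 hocc⟩
      · rintro ⟨hiN, hocc⟩
        have hip : i + P.length ≤ x + y := by
          have := hocc.2; simp at this; omega
        exact ⟨hiN, (occ_sub_left (by simp; omega)).2 hocc, hip⟩
    have occS_of_23 : ∀ j, OccursAt P (F2 ++ F3) j → OccursAt P S (x + j) := by
      intro j hj
      have : OccursAt P (F1 ++ (F2 ++ F3)) (F1.length + j) := occ_shift.2 hj
      rwa [← List.append_assoc] at this
    have occ23_of_S : ∀ i, x ≤ i → OccursAt P S i → OccursAt P (F2 ++ F3) (i - x) := by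
      intro i hxi hocc
      rw [hS, List.append_assoc] at hocc
      rw [(by omega : i = F1.length + (i - x))] at hocc
      exact occ_shift.1 hocc
    have e23 : (U.filter (fun i => x ≤ i)).card
        = ((Finset.range N).filter (fun i => OccursAt P (F2 ++ F3) i)).card := by
      apply Finset.card_bij' (fun i _ => i - x) (fun j _ => x + j)
      · intro i hi
        simp only [hU, Finset.filter_filter, Finset.mem_filter, Finset.mem_range] at hi ⊢
        exact ⟨by omega, occ23_of_S i hi.2.2 hi.2.1⟩
      · intro j hj
        simp only [hU, Finset.filter_filter, Finset.mem_filter, Finset.mem_range] at hj ⊢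
        have hocc := occS_of_23 j hj.2
        refine ⟨by have := hocc.2; omega, hocc, by omega⟩
      · intro i hi
        simp only [hU, Finset.filter_filter, Finset.mem_filter, Finset.mem_range] at hi
        omega
      · intro j _
        omega
    have e2 : (U.filter (fun i => i + P.length ≤ x + y ∧ x ≤ i)).card
        = ((Finset.range N).filter (fun i => OccursAt P F2 i)).card := by
      apply Finset.card_bij' (fun i _ => i - x) (fun j _ => x + j)
      · intro i hi
        simp only [hU, Finset.filter_filter, Finset.mem_filter, Finset.mem_range] at hi ⊢
        obtain ⟨hiN, hocc, hp, hq⟩ := hi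
        have h23 := occ23_of_S i hq hocc
        refine ⟨by omega, (occ_sub_left (A := F2) (B := F3) (by omega)).1 h23⟩
      · intro j hj
        simp only [hU, Finset.filter_filter, Finset.mem_filter, Finset.mem_range] at hj ⊢
        obtain ⟨hjN, hocc⟩ := hj
        have hjy : j + P.length ≤ y := hocc.2
        have h23 : OccursAt P (F2 ++ F3) j := (occ_sub_left (by omega)).2 hocc
        have hoccS := occS_of_23 j h23
        refine ⟨by omega, hoccS, by omega, by omega⟩
      · intro i hi
        simp only [hU, Finset.filter_filter, Finset.mem_filter, Finset.mem_range] at hi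
        omega
      · intro j _
        omega
    -- the crossing set
    set E : Finset ℕ :=
      U.filter (fun i => ¬ i + P.length ≤ x + y ∧ ¬ x ≤ i) with hE
    have memE : ∀ i, i ∈ E ↔ OccursAt P S i ∧ x + y < i + P.length ∧ i < x := by
      intro i
      simp only [hE, hU, Finset.filter_filter, Finset.mem_filter, Finset.mem_range]
      constructor
      · rintro ⟨h1, h2, h3, h4⟩; exact ⟨h2, by omega, by omega⟩
      · rintro ⟨h1, h2, h3⟩
        refine ⟨?_, h1, by omega, by omega⟩
        have := h1.2; omega
    have hPbig : ∀ i ∈ E, y + 2 ≤ P.length := by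
      intro i hi
      rw [memE] at hi
      omega
    have hsub : ∀ i ∈ E, ∀ j ∈ E, i = j := by
      have main : ∀ i ∈ E, ∀ j ∈ E, i < j → False := by
        intro i hi j hj hij
        have hPb := hPbig i hi
        rw [memE] at hi hj
        refine no_close_occs hPper (d := j - i) (by omega) (by omega) hi.1 ?_
        rw [(by omega : i + (j - i) = j)]
        exact hj.1
      intro i hi j hj
      rcases Nat.lt_trichotomy i j with h | h | h
      · exact absurd (main i hi j hj h) (by simp)
      · exact h
      · exact absurd (main j hj i hi h) (by simp)
    have hcond_of : E.Nonempty → cond P := by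
      rintro ⟨i, hi⟩
      have hPb := hPbig i hi
      rw [memE] at hi
      obtain ⟨hocc, hcr, hix⟩ := hi
      refine ⟨⟨i, hocc, hix, hcr⟩, ?_, ?_⟩
      · rintro hinf
        obtain ⟨j, hj⟩ := (infix_iff_occ _ _).1 hinf
        have hjb : j + P.length ≤ x + y := by have := hj.2; simp at this; omega
        have hjS : OccursAt P S j :=
          (occ_sub_left (A := F1 ++ F2) (B := F3) (by simp; omega)).2 hj
        have hji : j < i := by omega
        refine no_close_occs hPper (d := i - j) (by omega) (by omega) hjS ?_
        rwa [(by omega : j + (i - j) = i)]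
      · rintro hinf
        obtain ⟨j, hj⟩ := (infix_iff_occ _ _).1 hinf
        have hjb : j + P.length ≤ y + x := by have := hj.2; simp at this; omega
        have hjS : OccursAt P S (x + j) := occS_of_23 j hj
        have hji : i < x + j := by omega
        refine no_close_occs hPper (d := x + j - i) (by omega) (by omega) hocc ?_
        rwa [(by omega : i + (x + j - i) = x + j)]
    have hE_of_cond : cond P → E.Nonempty := by
      rintro ⟨⟨s, hocc, hsx, hcr⟩, -, -⟩
      exact ⟨s, (memE s).2 ⟨hocc, hcr, hsx⟩⟩
    have hEcard : E.card = if cond P then 1 else 0 := by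
      by_cases hc : cond P
      · rw [if_pos hc]
        have h1 : 0 < E.card := (hE_of_cond hc).card_pos
        have h2 : E.card ≤ 1 := Finset.card_le_one.2 fun a ha b hb => hsub a ha b hb
        omega
      · rw [if_neg hc]
        rw [Finset.card_eq_zero, ← Finset.not_nonempty_iff_eq_empty]
        exact fun h => hc (hcond_of h)
    rw [e12, e2, hEcard] at hie
    omega
  -- assemble
  have hset : {P : List α | P ∈ D ∧
      (∃ s, OccursAt P (F1 ++ F2 ++ F3) s ∧ s < F1.length ∧
        F1.length + F2.length < s + P.length) ∧
      ¬ (P <:+: F1 ++ F2) ∧ ¬ (P <:+: F2 ++ F3)}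
      = ↑(D.filter cond) := by
    ext P
    simp only [Set.mem_setOf_eq, Finset.coe_filter, hcond]
    exact Iff.rfl
  rw [hset, Set.ncard_coe_finset]
  unfold CountOcc
  have hsum : ∑ P ∈ D, ({i | OccursAt P S i}.ncard + {i | OccursAt P F2 i}.ncard)
      = ∑ P ∈ D, ({i | OccursAt P (F1 ++ F2) i}.ncard
          + {i | OccursAt P (F2 ++ F3) i}.ncard + (if cond P then 1 else 0)) :=
    Finset.sum_congr rfl key
  rw [Finset.sum_add_distrib] at hsum
  rw [Finset.sum_add_distrib, Finset.sum_add_distrib] at hsum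
  have hcard : (D.filter cond).card = ∑ P ∈ D, (if cond P then 1 else 0) :=
    Finset.card_filter cond D
  rw [hcard]
  omega
end

section
/- Let F1, F2, F3 be consecutive fragments with |F1| = |F3| ≤ |F2|/8. If F2 is not periodic (per(F2) > |F2|/2), then no highly periodic pattern P (per(P) ≤ |P|/4) has an occurrence starting in F1 and ending in F3. -/
lemma T_getElem_F2 {α : Type*} (F1 F2 F3 : List α) (i : ℕ) (hi : i < F2.length) :
    (F1 ++ F2 ++ F3)[F1.length + i]? = F2[i]? := by
  rw [List.getElem?_append, if_pos (by simp; omega), List.getElem?_append,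
    if_neg (by omega)]
  congr 1
  omega

/-- For consecutive fragments with `|F1| = |F3| ≤ |F2|/8`: if `F2` is not periodic,
then no highly periodic pattern `P` has an occurrence in `F1F2F3` starting in `F1`
and ending in `F3`. -/
theorem stmt15 {α : Type*} (F1 F2 F3 P : List α)
    (hx : F1.length = F3.length) (hy : 8 * F1.length ≤ F2.length)
    (hnp : 2 * minPeriod F2 > F2.length)
    (hP : P ≠ []) (hhp : 4 * minPeriod P ≤ P.length) :
    ¬ ∃ s, OccursAt P (F1 ++ F2 ++ F3) s ∧ s < F1.length ∧
        F1.length + F2.length < s + P.length := by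
  rintro ⟨s, ⟨hocc, hlen⟩, hs, hend⟩
  set T := F1 ++ F2 ++ F3 with hT
  have hTlen : T.length = F1.length + F2.length + F3.length := by simp [hT]; omega
  have hne : {p | IsPeriod P p}.Nonempty := by
    refine ⟨P.length, List.length_pos_iff.2 hP, fun i hi => ?_⟩
    omega
  have hmem : IsPeriod P (minPeriod P) := Nat.sInf_mem hne
  set p := minPeriod P with hp
  -- P[j]? = T[s + j]? for j < P.length
  have hPT : ∀ j, j < P.length → P[j]? = T[s + j]? := by
    intro j hj
    conv_lhs => rw [← hocc]
    rw [List.getElem?_take, if_pos hj, List.getElem?_drop]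
  -- p is a period of F2
  have hperF2 : IsPeriod F2 p := by
    refine ⟨hmem.1, fun i hi => ?_⟩
    have h1 : F2[i]? = P[F1.length - s + i]? := by
      rw [hPT _ (by omega), show s + (F1.length - s + i) = F1.length + i by omega,
        T_getElem_F2 _ _ _ _ (by omega)]
    have h2 : F2[i + p]? = P[F1.length - s + i + p]? := by
      rw [hPT _ (by omega), show s + (F1.length - s + i + p) = F1.length + (i + p) by omega,
        T_getElem_F2 _ _ _ _ (by omega)]
    rw [h1, h2, show F1.length - s + i + p = F1.length - s + i + p from rfl]
    exact hmem.2 _ (by omega)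
  have hle : minPeriod F2 ≤ p := Nat.sInf_le hperF2
  omega
end
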